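/- Let Λ be a ring, (P₀, ε) a differential Λ-module with P₀ projective, and suppose given: a finite projective resolution 0 → P_l →^{∂_l} ⋯ → P₁ →^{∂₁} P₀ → im(ε) → 0 of im(ε) ending in the given P₀ (with ∂₁ followed by ε's corestriction), and Λ-linear maps s_i : P_i → P_{i+1} (0 ≤ i ≤ l−1) with ∂₁ s₀ = ε, ∂_{i+1} s_i + s_{i−1} ∂_i = 0 for 1 ≤ i ≤ l−1, and s_{l−1} ∂_l = 0 (a null-homotopy of the zero-lift). Set ΔP = P_l ⊕ ⋯ ⊕ P₁ ⊕ P₀ with compressed differential ε_{ΔP}, let h : ΔP → ΔP have components h_i = (−1)ⁱ s_i, let e : ΔP → P₀ be the projection and m : P₀ → ΔP the inclusion. Then m ε e = ε_{ΔP} h − h ε_{ΔP}. -/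
import Mathlib


/-!
STATEMENT 18: Given a finite projective resolution P_l → ⋯ → P₁ → P₀ of im(ε) (with
`d i : P (i+1) → P i`, and `P i` trivial for i > l), where (P₀, ε) is a differential
module with P₀ projective, and a null-homotopy (s_i) with d₀ s₀ = ε,
d_i s_i + s_{i-1} d_{i-1} = 0 (1 ≤ i) — the relation s_{l-1} ∂_l = 0 being automatic
since P_{l+1} is trivial — set ΔP = ⊕ᵢ P_i with the compressed differential ε_{ΔP},
h : ΔP → ΔP with components h_i = (−1)^i s_i, e : ΔP → P₀ the projection and
m : P₀ → ΔP the inclusion.  Then m ∘ ε ∘ e = ε_{ΔP} ∘ h − h ∘ ε_{ΔP}.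
-/

open DirectSum

theorem homotopy_conjugation_identity
    (Λ : Type*) [Ring Λ] (l : ℕ)
    (P : ℕ → Type) [∀ i, AddCommGroup (P i)] [∀ i, Module Λ (P i)]
    [∀ i, Module.Projective Λ (P i)]
    (hbdd : ∀ i, l < i → Subsingleton (P i))
    (d : ∀ i : ℕ, P (i + 1) →ₗ[Λ] P i)
    (hc : ∀ i, d i ∘ₗ d (i + 1) = 0)
    (ε : P 0 →ₗ[Λ] P 0) (hε : ε ∘ₗ ε = 0)
    -- the resolution resolves im ε: exactness in positive degrees and ker(ε-corestr.)
    (hex0 : LinearMap.ker ε = LinearMap.range (d 0))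
    (hex : ∀ i, LinearMap.ker (d i) = LinearMap.range (d (i + 1)))
    -- the null-homotopy data (s_i)
    (s : ∀ i : ℕ, P i →ₗ[Λ] P (i + 1))
    (hs0 : d 0 ∘ₗ s 0 = ε)
    (hsi : ∀ i, d (i + 1) ∘ₗ s (i + 1) + s i ∘ₗ d i = 0)
    -- the compressed differential on ΔP = ⊕ᵢ P_i
    (εΔ : (⨁ i, P i) →ₗ[Λ] ⨁ i, P i)
    (hεΔ : εΔ = DirectSum.toModule Λ ℕ (⨁ i, P i) (fun i =>
      match i with
      | 0 => 0
      | (j + 1) => (DirectSum.lof Λ ℕ P j) ∘ₗ d j))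
    -- the map h with components (−1)^i s_i
    (h : (⨁ i, P i) →ₗ[Λ] ⨁ i, P i)
    (hh : h = DirectSum.toModule Λ ℕ (⨁ i, P i) (fun i =>
      ((-1 : ℤ) ^ i) • ((DirectSum.lof Λ ℕ P (i + 1)) ∘ₗ s i)))
    -- the projection e and inclusion m
    (e : (⨁ i, P i) →ₗ[Λ] P 0) (he : e = DirectSum.component Λ ℕ P 0)
    (m : P 0 →ₗ[Λ] ⨁ i, P i) (hm : m = DirectSum.lof Λ ℕ P 0) :
    m ∘ₗ ε ∘ₗ e = εΔ ∘ₗ h - h ∘ₗ εΔ := by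
  subst hεΔ hh he hm
  refine DirectSum.linearMap_ext Λ (fun i => ?_)
  ext x
  cases i with
  | zero =>
      have h0 : d 0 (s 0 x) = ε x := congrFun (congrArg DFunLike.coe hs0) x
      simp [DirectSum.toModule_lof, DirectSum.component.lof_self, h0]
  | succ j =>
      have hj : d (j + 1) (s (j + 1) x) + s j (d j x) = 0 :=
        congrFun (congrArg DFunLike.coe (hsi j)) x
      have hneg : s j (d j x) = - d (j + 1) (s (j + 1) x) :=
        eq_neg_of_add_eq_zero_right hj
      simp only [LinearMap.comp_apply, DirectSum.toModule_lof, LinearMap.smul_apply,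
        LinearMap.sub_apply, map_smul, pow_succ, DirectSum.component.of, hneg, map_neg,
        smul_neg, mul_neg_one, neg_smul, sub_neg_eq_add, neg_add_cancel]
      simp
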